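/- One-step error of the second-order Taylor (Milstein) scheme for ODEs driven by a smooth path (estimate (4.5)): In the setting below, there exists a constant C, depending only on d and l, such that for all z ∈ ℝ^d and all 0 ≤ s ≤ t ≤ T, |Φ(z;s,t) − Ψ(z;s,t)| ≤ C · sup_{1≤i,j,p≤l} ‖D^{(i)}D^{(j)}g^{(p)}‖_∞ · ( ∫_s^t |ẋ_u| du )³. -/

import Mathlib

open Set MeasureTheory
open intervalIntegral
open scoped ENNReal

noncomputable section

/-- `ℝ^m` with the Euclidean norm. -/
abbrev Vec (m : ℕ) := EuclideanSpace ℝ (Fin m)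

/-- Sup "norm" `sup_{t ∈ [a,b]} ‖f t‖` as an extended nonnegative real. -/
noncomputable def supENorm {E : Type*} [NormedAddCommGroup E] (a b : ℝ) (f : ℝ → E) : ℝ≥0∞ :=
  ⨆ t : Icc a b, ENNReal.ofReal ‖f t‖

/-- γ-Hölder seminorm `sup_{a ≤ s < t ≤ b} ‖f t - f s‖/(t-s)^γ` as an extended
nonnegative real. -/
noncomputable def holderENorm {E : Type*} [NormedAddCommGroup E] (γ a b : ℝ) (f : ℝ → E) :
    ℝ≥0∞ :=
  ⨆ p : {p : ℝ × ℝ // a ≤ p.1 ∧ p.1 < p.2 ∧ p.2 ≤ b},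
    ENNReal.ofReal (‖f p.1.2 - f p.1.1‖ / (p.1.2 - p.1.1) ^ γ)

/-- `g` is `C³`, bounded with bounded derivatives up to order three. -/
def IsC3Bounded {E F : Type*} [NormedAddCommGroup E] [NormedSpace ℝ E]
    [NormedAddCommGroup F] [NormedSpace ℝ F] (g : E → F) : Prop :=
  ContDiff ℝ 3 g ∧ ∀ n : ℕ, n ≤ 3 → ∃ B : ℝ, ∀ z : E, ‖iteratedFDeriv ℝ n g z‖ ≤ B

/-- The vector field `D^{(i)}g^{(j)} = ∑_p g^{(i)}_p ∂_p g^{(j)}`: the derivative of the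
`j`-th column of `g` in the direction of the `i`-th column. -/
noncomputable def Dvf (d l : ℕ) (g : Vec d → Vec l →L[ℝ] Vec d) (i j : Fin l)
    (z : Vec d) : Vec d :=
  fderiv ℝ (fun w => g w (EuclideanSpace.single j (1 : ℝ))) z
    (g z (EuclideanSpace.single i (1 : ℝ)))

/-- The vector field `D^{(i)}D^{(j)}g^{(p)}`. -/
noncomputable def DDvf (d l : ℕ) (g : Vec d → Vec l →L[ℝ] Vec d) (i j p : Fin l)
    (z : Vec d) : Vec d :=
  fderiv ℝ (fun w => Dvf d l g j p w) z (g z (EuclideanSpace.single i (1 : ℝ)))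

/-- `x` is continuous on `[0,T]` and piecewise continuously differentiable with (piecewise)
derivative `x'`: there is a partition `0 = τ_0 < ⋯ < τ_N = T` such that `x'` is continuous on
each `[τ_k, τ_{k+1}]` and is the derivative of `x` on each `(τ_k, τ_{k+1})`. -/
def PiecewiseC1 (l : ℕ) (T : ℝ) (x x' : ℝ → Vec l) : Prop :=
  ContinuousOn x (Icc 0 T) ∧
  ∃ (N : ℕ) (τ : ℕ → ℝ), τ 0 = 0 ∧ τ N = T ∧ (∀ k < N, τ k < τ (k + 1)) ∧
    ∀ k < N, ContinuousOn x' (Icc (τ k) (τ (k + 1))) ∧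
      ∀ t ∈ Ioo (τ k) (τ (k + 1)), HasDerivAt x (x' t) t

/-- `y` solves, on `[s,t]`, the ODE `ẏ_u = g(y_u) ẋ_u` with `y_s = z`, in integral form. -/
def OdeSol (d l : ℕ) (g : Vec d → Vec l →L[ℝ] Vec d) (x' : ℝ → Vec l) (s t : ℝ)
    (z : Vec d) (y : ℝ → Vec d) : Prop :=
  y s = z ∧ ∀ u ∈ Icc s t, y u = z + ∫ v in s..u, g (y v) (x' v)

/-- The second-order Taylor (Milstein) numerical flow
`Ψ(z;s,t) = z + g(z)(x_t - x_s) + ∑_{i,j} (D^{(i)}g^{(j)})(z) ∫_s^t (x^{(i)}_u - x^{(i)}_s) ẋ^{(j)}_u du`. -/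
noncomputable def Psi (d l : ℕ) (g : Vec d → Vec l →L[ℝ] Vec d) (x x' : ℝ → Vec l)
    (s t : ℝ) (z : Vec d) : Vec d :=
  z + g z (x t - x s) +
    ∑ i : Fin l, ∑ j : Fin l,
      (∫ u in s..t, (x u i - x s i) * x' u j) • Dvf d l g i j z

/-- The entries of the Lévy area `x²_{st} = ∫_s^t (x_u - x_s) ⊗ ẋ_u du` of a smooth path. -/
noncomputable def x2Entry (l : ℕ) (x x' : ℝ → Vec l) (s t : ℝ) (i j : Fin l) : ℝ :=
  ∫ u in s..t, (x u i - x s i) * x' u j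

/-- Euclidean norm of the Lévy area `x²_{st}` of a smooth path. -/
noncomputable def x2Norm (l : ℕ) (x x' : ℝ → Vec l) (s t : ℝ) : ℝ :=
  Real.sqrt (∑ i : Fin l, ∑ j : Fin l, (x2Entry l x x' s t i j) ^ 2)

/-- The rough-path norm `‖x‖_{γ,rough} = sup_{[0,T]} |x| + γ-Hölder seminorm of x
+ sup_{s<t} |x²_{st}|/(t-s)^{2γ}` of a smooth path. -/
noncomputable def roughNormSmooth (l : ℕ) (γ T : ℝ) (x x' : ℝ → Vec l) : ℝ :=
  (supENorm 0 T x + holderENorm γ 0 T x +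
    ⨆ p : {p : ℝ × ℝ // 0 ≤ p.1 ∧ p.1 < p.2 ∧ p.2 ≤ T},
      ENNReal.ofReal (x2Norm l x x' p.1.1 p.1.2 / (p.1.2 - p.1.1) ^ (2 * γ))).toReal


lemma abs_coord_le_norm {m : ℕ} (w : Vec m) (i : Fin m) : |w i| ≤ ‖w‖ := by
  have h := EuclideanSpace.norm_eq w
  rw [h]
  have : |w i| = Real.sqrt (‖w i‖ ^ 2) := by
    rw [Real.sqrt_sq_eq_abs]; simp
  rw [this]
  apply Real.sqrt_le_sqrt
  exact Finset.single_le_sum (f := fun j => ‖w j‖ ^ 2) (fun j _ => by positivity) (Finset.mem_univ i)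

lemma euclidean_decomp {m : ℕ} (w : Vec m) :
    ∑ i, w i • EuclideanSpace.single i (1:ℝ) = w := by
  ext j
  have : (∑ i, w i • EuclideanSpace.single i (1:ℝ)) j
      = ∑ i, (w i • EuclideanSpace.single i (1:ℝ)) j :=
    by rw [WithLp.ofLp_sum]; exact Finset.sum_apply j Finset.univ _
  rw [this]
  simp [EuclideanSpace.single_apply]

lemma ftc_finset {E : Type*} [NormedAddCommGroup E] [NormedSpace ℝ E] [CompleteSpace E]
    (K : Finset ℝ) :
    ∀ {f f' : ℝ → E} {a b : ℝ}, a ≤ b → ContinuousOn f (Icc a b) →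
    (∀ u ∈ Ioo a b, u ∉ K → HasDerivAt f (f' u) u) →
    IntervalIntegrable f' MeasureTheory.volume a b →
    ∫ u in a..b, f' u = f b - f a := by
  induction K using Finset.induction_on with
  | empty =>
    intro f f' a b hab hc hd hi
    exact integral_eq_sub_of_hasDeriv_right_of_le hab hc
      (fun u hu => ((hd u hu (by simp)).hasDerivWithinAt)) hi
  | @insert c K hcK ih =>
    intro f f' a b hab hc hd hi
    by_cases hcm : c ∈ Ioo a b
    · have h1 : ∫ u in a..c, f' u = f c - f a := by
        refine ih hcm.1.le (hc.mono (Icc_subset_Icc le_rfl hcm.2.le)) (fun u hu huK => ?_)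
          (hi.mono_set ?_)
        · exact hd u ⟨hu.1, hu.2.trans hcm.2⟩ (by simp [Finset.mem_insert, huK, ne_of_lt hu.2])
        · rw [uIcc_of_le hcm.1.le, uIcc_of_le hab]
          exact Icc_subset_Icc le_rfl hcm.2.le
      have h2 : ∫ u in c..b, f' u = f b - f c := by
        refine ih hcm.2.le (hc.mono (Icc_subset_Icc hcm.1.le le_rfl)) (fun u hu huK => ?_)
          (hi.mono_set ?_)
        · exact hd u ⟨hcm.1.trans hu.1, hu.2⟩
            (by simp [Finset.mem_insert, huK, (ne_of_gt hu.1)])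
        · rw [uIcc_of_le hcm.2.le, uIcc_of_le hab]
          exact Icc_subset_Icc hcm.1.le le_rfl
      have := integral_add_adjacent_intervals
        (hi.mono_set (by rw [uIcc_of_le hcm.1.le, uIcc_of_le hab]; exact Icc_subset_Icc le_rfl hcm.2.le))
        (hi.mono_set (by rw [uIcc_of_le hcm.2.le, uIcc_of_le hab]; exact Icc_subset_Icc hcm.1.le le_rfl))
      rw [← this, h1, h2]; abel
    · refine ih hab hc (fun u hu huK => hd u hu ?_) hi
      simp only [Finset.mem_insert, not_or]
      exact ⟨fun h => hcm (h ▸ hu), huK⟩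

lemma integrableOn_smul_cont {E : Type*} [NormedAddCommGroup E] [NormedSpace ℝ E]
    {c : ℝ → ℝ} {φ : ℝ → E} {a b : ℝ}
    (hc : IntegrableOn c (Icc a b)) (hφ : ContinuousOn φ (Icc a b)) :
    IntegrableOn (fun v => c v • φ v) (Icc a b) := by
  obtain ⟨C, hC⟩ := isCompact_Icc.exists_bound_of_continuousOn hφ
  refine Integrable.mono' ((hc.norm).mul_const C)
    ((hc.aestronglyMeasurable).smul (hφ.aestronglyMeasurable measurableSet_Icc)) ?_
  refine (ae_restrict_iff' measurableSet_Icc).2 (Filter.Eventually.of_forall fun v hv => ?_)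
  rw [norm_smul]
  exact mul_le_mul_of_nonneg_left (hC v hv) (norm_nonneg _)

lemma piecewise_facts {l : ℕ} {T : ℝ} (hT : 0 < T) {x x' : ℝ → Vec l}
    (hx : PiecewiseC1 l T x x') :
    ∃ K : Finset ℝ,
      (∀ a b, a ∈ Icc 0 T → b ∈ Icc 0 T → a ≤ b →
        IntervalIntegrable x' MeasureTheory.volume a b ∧ (∫ u in a..b, x' u) = x b - x a) ∧
      (∀ u ∈ Icc 0 T, u ∉ K → ContinuousAt x' u) := by
  classical
  obtain ⟨hxc, N, τ, hτ0, hτN, hτlt, hpiece⟩ := hx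
  have key : ∀ j k, j ≤ k → k ≤ N → τ j ≤ τ k := by
    intro j k hjk hkN
    induction k, hjk using Nat.le_induction with
    | base => exact le_rfl
    | succ k hjk ih => exact (ih (by omega)).trans (hτlt k (by omega)).le
  have hN : 0 < N := by
    rcases Nat.eq_zero_or_pos N with h | h
    · exfalso; rw [h, hτ0] at hτN; linarith
    · exact h
  have main : ∀ k, k ≤ N → ∀ a b, 0 ≤ a → a ≤ b → b ≤ τ k →
      IntervalIntegrable x' MeasureTheory.volume a b ∧ (∫ u in a..b, x' u) = x b - x a := by
    intro k
    induction k with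
    | zero =>
      intro _ a b ha hab hb
      rw [hτ0] at hb
      have hba : a = b := le_antisymm hab (hb.trans ha)
      subst hba
      exact ⟨IntervalIntegrable.refl, by rw [integral_same]; abel⟩
    | succ k ih =>
      intro hk1 a b ha hab hb
      have hkN : k < N := by omega
      have hτk0 : 0 ≤ τ k := hτ0 ▸ key 0 k (by omega) hkN.le
      have hτk1T : τ (k+1) ≤ T := hτN ▸ key (k+1) N (by omega) le_rfl
      have piece : ∀ a b, τ k ≤ a → a ≤ b → b ≤ τ (k+1) →
          IntervalIntegrable x' MeasureTheory.volume a b ∧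
          (∫ u in a..b, x' u) = x b - x a := by
        intro a b h1 h2 h3
        have hint : IntervalIntegrable x' MeasureTheory.volume a b := by
          apply ContinuousOn.intervalIntegrable
          rw [uIcc_of_le h2]
          exact (hpiece k hkN).1.mono (Icc_subset_Icc h1 h3)
        refine ⟨hint, ?_⟩
        refine integral_eq_sub_of_hasDerivAt_of_le h2
          (hxc.mono (Icc_subset_Icc (hτk0.trans h1) (h3.trans hτk1T))) (fun u hu => ?_) hint
        exact (hpiece k hkN).2 u (Ioo_subset_Ioo h1 h3 hu)
      rcases le_or_gt b (τ k) with h | h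
      · exact ih hkN.le a b ha hab h
      rcases le_or_gt (τ k) a with h' | h'
      · exact piece a b h' hab hb
      · obtain ⟨i1, e1⟩ := ih hkN.le a (τ k) ha h'.le le_rfl
        obtain ⟨i2, e2⟩ := piece (τ k) b le_rfl h.le hb
        refine ⟨i1.trans i2, ?_⟩
        rw [← integral_add_adjacent_intervals i1 i2, e1, e2]; abel
  refine ⟨Finset.image τ (Finset.range (N+1)), fun a b ha hb hab =>
    main N le_rfl a b ha.1 hab (hτN ▸ hb.2), fun u hu huK => ?_⟩
  have loc : ∃ k < N, u ∈ Icc (τ k) (τ (k+1)) := by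
    set k₀ := Nat.findGreatest (fun k => τ k ≤ u) N with hk₀
    have hspec : τ k₀ ≤ u := Nat.findGreatest_spec (P := fun k => τ k ≤ u) (Nat.zero_le N) (show τ 0 ≤ u by rw [hτ0]; exact hu.1)
    have hk₀N : k₀ ≤ N := Nat.findGreatest_le N
    rcases eq_or_lt_of_le hk₀N with h | h
    · have huT : u = T := le_antisymm hu.2 (by rw [← hτN, ← h]; exact hspec)
      refine ⟨N - 1, Nat.sub_lt hN one_pos, ?_, ?_⟩
      · rw [huT, ← hτN]; exact key (N-1) N (by omega) le_rfl
      · rw [huT, ← hτN]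
        have hNe : N - 1 + 1 = N := Nat.succ_pred_eq_of_pos hN
        rw [hNe]
    · refine ⟨k₀, h, hspec, ?_⟩
      by_contra hcon
      push_neg at hcon
      have := Nat.le_findGreatest (P := fun k => τ k ≤ u) (m := k₀ + 1) (n := N) (by omega) hcon.le
      omega
  obtain ⟨k, hkN, hk1, hk2⟩ := loc
  have h1 : τ k ≠ u := fun h => huK (Finset.mem_image.2 ⟨k, Finset.mem_range.2 (by omega), h⟩)
  have h2 : τ (k+1) ≠ u := fun h => huK (Finset.mem_image.2 ⟨k+1, Finset.mem_range.2 (by omega), h⟩)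
  have huo : u ∈ Ioo (τ k) (τ (k+1)) := ⟨lt_of_le_of_ne hk1 h1, lt_of_le_of_ne hk2 (Ne.symm h2)⟩
  exact (hpiece k hkN).1.continuousAt (Icc_mem_nhds huo.1 huo.2)

lemma sol_regularity {d l : ℕ} {g : Vec d → Vec l →L[ℝ] Vec d} (hgc : Continuous g)
    {B0 : ℝ} (hB0 : ∀ w, ‖g w‖ ≤ B0)
    {x' : ℝ → Vec l} {s t : ℝ} (hst : s ≤ t)
    (hx'i : IntervalIntegrable x' MeasureTheory.volume s t)
    {z : Vec d} {y : ℝ → Vec d}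
    (hy : ∀ u ∈ Icc s t, y u = z + ∫ v in s..u, g (y v) (x' v)) :
    IntegrableOn (fun v => g (y v) (x' v)) (Icc s t) MeasureTheory.volume ∧
      ContinuousOn y (Icc s t) := by
  set F := fun v => g (y v) (x' v) with hF
  have hFb : ∀ v, ‖F v‖ ≤ B0 * ‖x' v‖ := fun v =>
    ((g (y v)).le_opNorm (x' v)).trans
      (mul_le_mul_of_nonneg_right (hB0 _) (norm_nonneg _))
  set E := {u ∈ Icc s t | IntegrableOn F (Ioc s u) MeasureTheory.volume} with hE
  have hEsub : E ⊆ Icc s t := fun u hu => hu.1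
  have hmono : ∀ u' ∈ E, ∀ u ∈ Icc s t, u ≤ u' → u ∈ E := fun u' hu' u hu h =>
    ⟨hu, hu'.2.mono_set (Ioc_subset_Ioc le_rfl h)⟩
  have hEoc : OrdConnected E :=
    ⟨fun u hu u' hu' v hv => hmono u' hu' v ⟨hu.1.1.trans hv.1, hv.2.trans hu'.1.2⟩ hv.2⟩
  have hEm : MeasurableSet E := hEoc.measurableSet
  set ρ := fun u => ∫ v in Ioc s u, F v with hρ
  have hIccInt : ∀ u' ∈ E, IntegrableOn F (Icc s u') MeasureTheory.volume := by
    intro u' hu'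
    rw [integrableOn_Icc_iff_integrableOn_Ioc]
    exact hu'.2
  have hρcont : ContinuousOn ρ E := by
    intro u hu
    by_cases hmax : ∃ u' ∈ E, u < u'
    · obtain ⟨u', hu'E, huu'⟩ := hmax
      have h1 : ContinuousOn ρ (Icc s u') := continuousOn_primitive (hIccInt u' hu'E)
      have h2 : ContinuousWithinAt ρ (E ∩ Iic u') u :=
        (h1.mono (fun v hv => ⟨hv.1.1.1, hv.2⟩)) u ⟨hu, le_of_lt huu'⟩
      exact (continuousWithinAt_inter (Iic_mem_nhds huu')).1 h2
    · push_neg at hmax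
      have h1 : ContinuousOn ρ (Icc s u) := continuousOn_primitive (hIccInt u hu)
      exact (h1.mono (fun v hv => ⟨hv.1.1, hmax v hv⟩)) u hu
  have hyE : ∀ u ∈ E, y u = z + ρ u := fun u hu => by
    rw [hy u hu.1, intervalIntegral.integral_of_le hu.1.1]
  have hyneg : ∀ u ∈ Icc s t \ E, y u = z := by
    intro u hu
    have hni : ¬ IntervalIntegrable F MeasureTheory.volume s u := by
      rw [intervalIntegrable_iff_integrableOn_Ioc_of_le hu.1.1]
      exact fun h => hu.2 ⟨hu.1, h⟩
    rw [hy u hu.1, intervalIntegral.integral_undef hni, add_zero]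
  have hymeas : AEStronglyMeasurable y (MeasureTheory.volume.restrict (Icc s t)) := by
    have h1 : AEStronglyMeasurable y (MeasureTheory.volume.restrict E) := by
      refine (((continuousOn_const (c := z)).add hρcont).aestronglyMeasurable hEm).congr ?_
      exact (ae_restrict_iff' hEm).2 (Filter.Eventually.of_forall fun u hu => (hyE u hu).symm)
    have h2 : AEStronglyMeasurable y
        (MeasureTheory.volume.restrict (Icc s t \ E)) := by
      refine (aestronglyMeasurable_const (b := z)).congr ?_
      exact (ae_restrict_iff' (measurableSet_Icc.diff hEm)).2
        (Filter.Eventually.of_forall fun u hu => (hyneg u hu).symm)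
    have hsplit : Icc s t = E ∪ (Icc s t \ E) := (union_diff_cancel hEsub).symm
    rw [hsplit]
    exact aestronglyMeasurable_union_iff.2 ⟨h1, h2⟩
  have hx'int : IntegrableOn x' (Icc s t) MeasureTheory.volume :=
    (intervalIntegrable_iff_integrableOn_Icc_of_le hst).1 hx'i
  have hFmeas : AEStronglyMeasurable F (MeasureTheory.volume.restrict (Icc s t)) := by
    have hgy : AEStronglyMeasurable (fun v => g (y v))
        (MeasureTheory.volume.restrict (Icc s t)) :=
      hgc.comp_aestronglyMeasurable hymeas
    exact isBoundedBilinearMap_apply.continuous.comp_aestronglyMeasurable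
      (hgy.prodMk hx'int.aestronglyMeasurable)
  have hFint : IntegrableOn F (Icc s t) MeasureTheory.volume := by
    refine Integrable.mono' ((hx'int.norm).const_mul B0) hFmeas ?_
    exact Filter.Eventually.of_forall fun v => hFb v
  refine ⟨hFint, ?_⟩
  have hcont2 : ContinuousOn (fun u => z + ρ u) (Icc s t) :=
    (continuousOn_const (c := z)).add (continuousOn_primitive
      (hFint.mono_set (fun v hv => hv)))
  refine hcont2.congr ?_
  intro u hu
  have huE : u ∈ E := ⟨hu, (hFint.mono_set (Ioc_subset_Icc_self.trans
    (Icc_subset_Icc le_rfl hu.2)))⟩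
  exact hyE u huE


lemma clm_decomp_apply {d l : ℕ} (A : Vec l →L[ℝ] Vec d) (w : Vec l) :
    A w = ∑ i, w i • A (EuclideanSpace.single i (1:ℝ)) := by
  conv_lhs => rw [← euclidean_decomp w]
  rw [map_sum]
  exact Finset.sum_congr rfl fun i _ => by rw [A.map_smul]


/-- **One-step error of the second-order Taylor (Milstein) scheme for ODEs driven by a smooth
path.** There is a constant `C`, depending only on `d` and `l`, such that
`|Φ(z;s,t) - Ψ(z;s,t)| ≤ C · sup_{i,j,p} ‖D^{(i)}D^{(j)}g^{(p)}‖_∞ · (∫_s^t |ẋ_u| du)³`,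
where `Φ(z;s,t) = y_t` for the solution `y` of `ẏ = g(y)ẋ`, `y_s = z`. -/
theorem milstein_one_step_error (d l : ℕ) :
    ∃ C : ℝ, 0 < C ∧
      ∀ (T : ℝ), 0 < T →
      ∀ g : Vec d → Vec l →L[ℝ] Vec d, IsC3Bounded g →
      ∀ x x' : ℝ → Vec l, PiecewiseC1 l T x x' →
      ∀ M : ℝ, (∀ (i j p : Fin l) (z : Vec d), ‖DDvf d l g i j p z‖ ≤ M) →
      ∀ (z : Vec d) (s t : ℝ), 0 ≤ s → s ≤ t → t ≤ T →
      ∀ y : ℝ → Vec d, OdeSol d l g x' s t z y →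
        ‖y t - Psi d l g x x' s t z‖ ≤ C * M * (∫ u in s..t, ‖x' u‖) ^ 3 := by
  classical
  refine ⟨(l : ℝ) ^ 3 + 1, by positivity, ?_⟩
  intro T hT g hg x x' hx M hM z s t hs hst htT y hy
  obtain ⟨K, hxint, hx'cont⟩ := piecewise_facts hT hx
  have hsT : s ∈ Icc 0 T := ⟨hs, hst.trans htT⟩
  have htTm : t ∈ Icc 0 T := ⟨hs.trans hst, htT⟩
  have hmem : ∀ v ∈ Icc s t, v ∈ Icc 0 T := fun v hv => ⟨hs.trans hv.1, hv.2.trans htT⟩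
  have hleft : s ∈ Icc s t := left_mem_Icc.2 hst
  have hright : t ∈ Icc s t := right_mem_Icc.2 hst
  have hx'i : IntervalIntegrable x' MeasureTheory.volume s t := (hxint s t hsT htTm hst).1
  have hx'Icc : IntegrableOn x' (Icc s t) MeasureTheory.volume :=
    (intervalIntegrable_iff_integrableOn_Icc_of_le hst).1 hx'i
  obtain ⟨B0, hB0'⟩ := hg.2 0 (by norm_num)
  have hB0 : ∀ w, ‖g w‖ ≤ B0 := fun w => by
    simpa [norm_iteratedFDeriv_zero] using hB0' w
  have hgc : Continuous g := hg.1.continuous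
  obtain ⟨hys, hyeq⟩ := hy
  obtain ⟨hFIcc, hycont⟩ := sol_regularity hgc hB0 hst hx'i hyeq
  set F := fun v => g (y v) (x' v) with hFdef
  have hFsub : ∀ u ∈ Icc s t, IntervalIntegrable F MeasureTheory.volume s u := fun u hu =>
    (intervalIntegrable_iff_integrableOn_Icc_of_le hu.1).2
      (hFIcc.mono_set (Icc_subset_Icc le_rfl hu.2))
  -- derivative of `y` off `K`
  have hyderiv : ∀ u ∈ Ioo s t, u ∉ K → HasDerivAt y (F u) u := by
    intro u hu huK
    have hu' : u ∈ Icc s t := Ioo_subset_Icc_self hu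
    have hnh : Icc s t ∈ nhds u := Icc_mem_nhds hu.1 hu.2
    have hyC : ContinuousAt y u := hycont.continuousAt hnh
    have hx'C : ContinuousAt x' u := hx'cont u (hmem u hu') huK
    have hFC : ContinuousAt F u :=
      ((hgc.continuousAt).comp hyC).clm_apply hx'C
    have hD := intervalIntegral.integral_hasDerivAt_right (hFsub u hu')
      ⟨Icc s t, hnh, hFIcc.aestronglyMeasurable⟩ hFC
    have heq : (fun v => z + ∫ r in s..v, F r) =ᶠ[nhds u] y :=
      Filter.eventually_of_mem hnh fun v hv => (hyeq v hv).symm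
    exact (hD.const_add z).congr_of_eventuallyEq heq.symm
  -- smoothness facts
  have hGC : ∀ j : Fin l, ContDiff ℝ 3 (fun w => g w (EuclideanSpace.single j (1:ℝ))) :=
    fun j => hg.1.clm_apply contDiff_const
  have hDvfC : ∀ i j : Fin l, ContDiff ℝ 2 (Dvf d l g i j) := by
    intro i j
    show ContDiff ℝ 2 fun w =>
      (fderiv ℝ (fun w' => g w' (EuclideanSpace.single j (1:ℝ))) w)
        (g w (EuclideanSpace.single i (1:ℝ)))
    exact ((hGC j).fderiv_right (m := 2) (by norm_num)).clm_apply ((hGC i).of_le (by norm_num))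
  have hDDC : ∀ p i j : Fin l, Continuous (DDvf d l g p i j) := by
    intro p i j
    show Continuous fun w =>
      (fderiv ℝ (fun w' => Dvf d l g i j w') w) (g w (EuclideanSpace.single p (1:ℝ)))
    exact ((((hDvfC i j).fderiv_right (m := 1) (by norm_num)).clm_apply
      ((hGC p).of_le (by norm_num))).continuous)
  -- coordinate facts
  have habs : ∀ (i : Fin l) v, |x' v i| ≤ ‖x' v‖ := fun i v => abs_coord_le_norm (x' v) i
  have haint : ∀ i : Fin l, IntegrableOn (fun v => x' v i) (Icc s t) MeasureTheory.volume :=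
    fun i => (EuclideanSpace.proj i : Vec l →L[ℝ] ℝ).integrable_comp hx'Icc
  have pat : ∀ (i : Fin l) {φ : ℝ → Vec d}, ContinuousOn φ (Icc s t) →
      IntegrableOn (fun v => x' v i • φ v) (Icc s t) MeasureTheory.volume :=
    fun i φ hφ => integrableOn_smul_cont (haint i) hφ
  have patI : ∀ (i : Fin l) {φ : ℝ → Vec d}, ContinuousOn φ (Icc s t) →
      ∀ u v, u ∈ Icc s t → v ∈ Icc s t →
      IntervalIntegrable (fun r => x' r i • φ r) MeasureTheory.volume u v := by
    intro i φ hφ u v hu hv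
    apply IntegrableOn.intervalIntegrable
    refine (pat i hφ).mono_set ?_
    rw [Set.uIcc_eq_union]
    refine union_subset (Icc_subset_Icc hu.1 hv.2) (Icc_subset_Icc hv.1 hu.2)
  have hycompC : ∀ {φ : Vec d → Vec d}, Continuous φ →
      ContinuousOn (fun v => φ (y v)) (Icc s t) := fun {φ} hφ => hφ.comp_continuousOn hycont
  have hDvfycont : ∀ i j : Fin l, ContinuousOn (fun v => Dvf d l g i j (y v)) (Icc s t) :=
    fun i j => hycompC (hDvfC i j).continuous
  have hGycont : ∀ j : Fin l,
      ContinuousOn (fun v => g (y v) (EuclideanSpace.single j (1:ℝ))) (Icc s t) :=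
    fun j => hycompC (hGC j).continuous
  -- third level integrand and primitive
  set Ψ : Fin l → Fin l → ℝ → Vec d :=
    fun i j w => ∑ p, x' w p • DDvf d l g p i j (y w) with hΨdef
  have hΨint : ∀ i j, IntegrableOn (Ψ i j) (Icc s t) MeasureTheory.volume := fun i j =>
    MeasureTheory.integrable_finset_sum _ (fun p _ => pat p (hycompC (hDDC p i j)))
  set J : Fin l → Fin l → ℝ → Vec d := fun i j r => ∫ w in s..r, Ψ i j w with hJdef
  have hJcont : ∀ i j, ContinuousOn (J i j) (Icc s t) := by
    intro i j
    have h := intervalIntegral.continuousOn_primitive_interval (a := s) (b := t)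
      (μ := MeasureTheory.volume) (f := Ψ i j) (by rw [uIcc_of_le hst]; exact hΨint i j)
    rwa [uIcc_of_le hst] at h
  -- second-level FTC: expansion of Dvf along y
  have hK2 : ∀ (i j : Fin l), ∀ r ∈ Icc s t,
      Dvf d l g i j (y r) = Dvf d l g i j z + J i j r := by
    intro i j r hr
    have hftc : (∫ w in s..r, Ψ i j w)
        = Dvf d l g i j (y r) - Dvf d l g i j (y s) := by
      refine ftc_finset K hr.1
        ((hDvfycont i j).mono (Icc_subset_Icc le_rfl hr.2)) ?_ ?_
      · intro u hu huK
        have hu2 : u ∈ Ioo s t := ⟨hu.1, lt_of_lt_of_le hu.2 hr.2⟩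
        have h1 := (((hDvfC i j).differentiable (by norm_num) (y u)).hasFDerivAt).comp_hasDerivAt
          u (hyderiv u hu2 huK)
        have h2 : fderiv ℝ (Dvf d l g i j) (y u) (F u) = Ψ i j u := by
          have h3 := clm_decomp_apply
            ((fderiv ℝ (Dvf d l g i j) (y u)).comp (g (y u))) (x' u)
          simp only [ContinuousLinearMap.comp_apply] at h3
          exact h3
        rw [← h2]
        exact h1
      · exact ((hΨint i j).mono_set
          (by rw [Set.uIcc_of_le hr.1]; exact Icc_subset_Icc le_rfl hr.2)).intervalIntegrable
    rw [hys] at hftc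
    rw [show J i j r = ∫ w in s..r, Ψ i j w by rw [hJdef], hftc]
    abel
  -- first-level FTC: expansion of g·e_j along y
  set P : Fin l → ℝ → Vec d :=
    fun j v => ∫ r in s..v, ∑ i, x' r i • Dvf d l g i j (y r) with hPdef
  have hΞint : ∀ j, IntegrableOn (fun r => ∑ i, x' r i • Dvf d l g i j (y r)) (Icc s t)
      MeasureTheory.volume := fun j =>
    MeasureTheory.integrable_finset_sum _ (fun i _ => pat i (hDvfycont i j))
  have hPcont : ∀ j, ContinuousOn (P j) (Icc s t) := by
    intro j
    have h := intervalIntegral.continuousOn_primitive_interval (a := s) (b := t)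
      (μ := MeasureTheory.volume) (by rw [uIcc_of_le hst]; exact hΞint j)
    rwa [uIcc_of_le hst] at h
  have hK1 : ∀ (j : Fin l), ∀ v ∈ Icc s t,
      g (y v) (EuclideanSpace.single j (1:ℝ))
        = g z (EuclideanSpace.single j (1:ℝ)) + P j v := by
    intro j v hv
    have hftc : (∫ r in s..v, ∑ i, x' r i • Dvf d l g i j (y r))
        = g (y v) (EuclideanSpace.single j (1:ℝ))
          - g (y s) (EuclideanSpace.single j (1:ℝ)) := by
      refine ftc_finset K hv.1
        ((hGycont j).mono (Icc_subset_Icc le_rfl hv.2)) ?_ ?_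
      · intro u hu huK
        have hu2 : u ∈ Ioo s t := ⟨hu.1, lt_of_lt_of_le hu.2 hv.2⟩
        have h1 := (((hGC j).differentiable (by norm_num) (y u)).hasFDerivAt).comp_hasDerivAt
          u (hyderiv u hu2 huK)
        have h2 : fderiv ℝ (fun w => g w (EuclideanSpace.single j (1:ℝ))) (y u) (F u)
            = ∑ i, x' u i • Dvf d l g i j (y u) := by
          have h3 := clm_decomp_apply
            ((fderiv ℝ (fun w => g w (EuclideanSpace.single j (1:ℝ))) (y u)).comp
              (g (y u))) (x' u)
          simp only [ContinuousLinearMap.comp_apply] at h3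
          exact h3
        rw [← h2]
        exact h1
      · exact ((hΞint j).mono_set
          (by rw [Set.uIcc_of_le hv.1]; exact Icc_subset_Icc le_rfl hv.2)).intervalIntegrable
    rw [hys] at hftc
    rw [show P j v = ∫ r in s..v, ∑ i, x' r i • Dvf d l g i j (y r) by rw [hPdef], hftc]
    abel
  -- coordinate FTC
  have hcoord : ∀ (i : Fin l), ∀ v ∈ Icc s t, (∫ r in s..v, x' r i) = x v i - x s i := by
    intro i v hv
    have hI := hxint s v hsT (hmem v hv)
    have hLi := (EuclideanSpace.proj i : Vec l →L[ℝ] ℝ).intervalIntegral_comp_comm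
      (hI hv.1).1
    rw [(hI hv.1).2] at hLi
    simpa using hLi
  -- expansion of the primitive P j
  have hPj : ∀ (j : Fin l), ∀ v ∈ Icc s t,
      P j v = ∑ i, ((x v i - x s i) • Dvf d l g i j z
        + ∫ r in s..v, x' r i • J i j r) := by
    intro j v hv
    have hsv : ∀ r ∈ Icc s v, r ∈ Icc s t := fun r hr => ⟨hr.1, hr.2.trans hv.2⟩
    rw [show P j v = ∫ r in s..v, ∑ i, x' r i • Dvf d l g i j (y r) by rw [hPdef]]
    rw [intervalIntegral.integral_finset_sum
      (fun i _ => patI i (hDvfycont i j) s v hleft hv)]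
    refine Finset.sum_congr rfl (fun i _ => ?_)
    have hcg : Set.EqOn (fun r => x' r i • Dvf d l g i j (y r))
        (fun r => x' r i • Dvf d l g i j z + x' r i • J i j r) (Set.uIcc s v) := by
      intro r hr
      rw [uIcc_of_le hv.1] at hr
      simp only
      rw [hK2 i j r (hsv r hr), smul_add]
    rw [intervalIntegral.integral_congr hcg,
      intervalIntegral.integral_add (patI i continuousOn_const s v hleft hv)
        (patI i (hJcont i j) s v hleft hv),
      intervalIntegral.integral_smul_const, hcoord i v hv]
  -- continuity of the inner double integral
  have hI2cont : ∀ i j, ContinuousOn (fun v => ∫ r in s..v, x' r i • J i j r) (Icc s t) := by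
    intro i j
    have h := intervalIntegral.continuousOn_primitive_interval (a := s) (b := t)
      (μ := MeasureTheory.volume) (by rw [uIcc_of_le hst]; exact pat i (hJcont i j))
    rwa [uIcc_of_le hst] at h
  -- per-j expansion of the main integral
  have hE2 : ∀ j : Fin l,
      (∫ v in s..t, x' v j • g (y v) (EuclideanSpace.single j (1:ℝ)))
      = (x t j - x s j) • g z (EuclideanSpace.single j (1:ℝ))
        + (∑ i, (∫ v in s..t, (x v i - x s i) * x' v j) • Dvf d l g i j z)
        + ∑ i, ∫ v in s..t, x' v j • (∫ r in s..v, x' r i • J i j r) := by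
    intro j
    have hcg1 : Set.EqOn (fun v => x' v j • g (y v) (EuclideanSpace.single j (1:ℝ)))
        (fun v => x' v j • g z (EuclideanSpace.single j (1:ℝ)) + x' v j • P j v)
        (Set.uIcc s t) := by
      intro v hv
      rw [uIcc_of_le hst] at hv
      simp only
      rw [hK1 j v hv, smul_add]
    rw [intervalIntegral.integral_congr hcg1,
      intervalIntegral.integral_add (patI j continuousOn_const s t hleft hright)
        (patI j (hPcont j) s t hleft hright),
      intervalIntegral.integral_smul_const, hcoord j t hright]
    have hcg2 : Set.EqOn (fun v => x' v j • P j v)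
        (fun v => (∑ i, x' v j • ((x v i - x s i) • Dvf d l g i j z))
          + ∑ i, x' v j • (∫ r in s..v, x' r i • J i j r)) (Set.uIcc s t) := by
      intro v hv
      rw [uIcc_of_le hst] at hv
      simp only
      rw [hPj j v hv, Finset.smul_sum, ← Finset.sum_add_distrib]
      exact Finset.sum_congr rfl fun i _ => by rw [smul_add]
    have hxcont : ContinuousOn x (Icc s t) := hx.1.mono (Icc_subset_Icc hs htT)
    have hxicont : ∀ i : Fin l, ContinuousOn (fun v => (x v i - x s i) • Dvf d l g i j z)
        (Icc s t) := by
      intro i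
      apply ContinuousOn.fun_smul _ continuousOn_const
      exact (((EuclideanSpace.proj i : Vec l →L[ℝ] ℝ).continuous.comp_continuousOn
        hxcont).sub continuousOn_const)
    have hint1 : IntervalIntegrable
        (fun v => ∑ i, x' v j • ((x v i - x s i) • Dvf d l g i j z))
        MeasureTheory.volume s t := by
      apply IntegrableOn.intervalIntegrable
      rw [uIcc_of_le hst]
      exact MeasureTheory.integrable_finset_sum _ (fun i _ => pat j (hxicont i))
    have hint2 : IntervalIntegrable
        (fun v => ∑ i, x' v j • (∫ r in s..v, x' r i • J i j r))
        MeasureTheory.volume s t := by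
      apply IntegrableOn.intervalIntegrable
      rw [uIcc_of_le hst]
      exact MeasureTheory.integrable_finset_sum _ (fun i _ => pat j (hI2cont i j))
    rw [intervalIntegral.integral_congr hcg2, intervalIntegral.integral_add hint1 hint2,
      intervalIntegral.integral_finset_sum
        (fun i _ => patI j (hxicont i) s t hleft hright),
      intervalIntegral.integral_finset_sum
        (fun i _ => patI j (hI2cont i j) s t hleft hright)]
    have hper : ∀ i : Fin l,
        (∫ v in s..t, x' v j • ((x v i - x s i) • Dvf d l g i j z))
          = (∫ v in s..t, (x v i - x s i) * x' v j) • Dvf d l g i j z := by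
      intro i
      rw [← intervalIntegral.integral_smul_const]
      refine intervalIntegral.integral_congr fun v _ => ?_
      simp only
      rw [smul_smul, mul_comm]
    rw [← add_assoc]
    congr 1
    congr 1
    exact Finset.sum_congr rfl fun i _ => hper i
  -- assembling the expansion
  have hyt : y t = z + ∫ v in s..t, F v := hyeq t hright
  have hFdec : Set.EqOn F
      (fun v => ∑ j, x' v j • g (y v) (EuclideanSpace.single j (1:ℝ))) (Set.uIcc s t) :=
    fun v _ => clm_decomp_apply (g (y v)) (x' v)
  have hsplit : (∫ v in s..t, F v)
      = ∑ j, ∫ v in s..t, x' v j • g (y v) (EuclideanSpace.single j (1:ℝ)) := by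
    rw [intervalIntegral.integral_congr hFdec]
    exact intervalIntegral.integral_finset_sum
      (fun j _ => patI j (hGycont j) s t hleft hright)
  have hgz : g z (x t - x s)
      = ∑ j, (x t j - x s j) • g z (EuclideanSpace.single j (1:ℝ)) := by
    have h := clm_decomp_apply (g z) (x t - x s)
    simpa using h
  have hmain : y t - Psi d l g x x' s t z
      = ∑ j, ∑ i, ∫ v in s..t, x' v j • (∫ r in s..v, x' r i • J i j r) := by
    have h1 : ∑ j, (∫ v in s..t, x' v j • g (y v) (EuclideanSpace.single j (1:ℝ)))
        = (∑ j, (x t j - x s j) • g z (EuclideanSpace.single j (1:ℝ)))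
          + (∑ j, ∑ i, (∫ v in s..t, (x v i - x s i) * x' v j) • Dvf d l g i j z)
          + ∑ j, ∑ i, ∫ v in s..t, x' v j • (∫ r in s..v, x' r i • J i j r) := by
      rw [← Finset.sum_add_distrib, ← Finset.sum_add_distrib]
      exact Finset.sum_congr rfl fun j _ => hE2 j
    have hcomm : (∑ i : Fin l, ∑ j : Fin l,
          (∫ u in s..t, (x u i - x s i) * x' u j) • Dvf d l g i j z)
        = ∑ j : Fin l, ∑ i : Fin l,
          (∫ v in s..t, (x v i - x s i) * x' v j) • Dvf d l g i j z :=
      Finset.sum_comm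
    rw [hyt, hsplit, h1]
    simp only [Psi]
    rw [hgz, hcomm]
    abel
  -- the bound
  set A := ∫ u in s..t, ‖x' u‖ with hA
  have hni : IntervalIntegrable (fun u => ‖x' u‖) MeasureTheory.volume s t := hx'i.norm
  have hnis : ∀ u v, u ∈ Icc s t → v ∈ Icc s t →
      IntervalIntegrable (fun w => ‖x' w‖) MeasureTheory.volume u v := by
    intro u v hu hv
    refine hni.mono_set ?_
    rw [Set.uIcc_eq_union, uIcc_of_le hst]
    exact union_subset (Icc_subset_Icc hu.1 hv.2) (Icc_subset_Icc hv.1 hu.2)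
  have hA0 : 0 ≤ A := by
    rw [hA]; exact intervalIntegral.integral_nonneg hst fun u _ => norm_nonneg _
  have hApart : ∀ v ∈ Icc s t, (∫ u in s..v, ‖x' u‖) ≤ A := by
    intro v hv
    have hadd := intervalIntegral.integral_add_adjacent_intervals
      (hnis s v hleft hv) (hnis v t hv hright)
    have h2 : 0 ≤ ∫ u in v..t, ‖x' u‖ :=
      intervalIntegral.integral_nonneg hv.2 fun u _ => norm_nonneg _
    rw [hA]
    linarith
  set lM := (l : ℝ) * M with hlMdef
  have hlM0 : 0 ≤ lM := by
    rcases Nat.eq_zero_or_pos l with h | h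
    · simp [hlMdef, h]
    · have hM0 : 0 ≤ M := le_trans (norm_nonneg _) (hM ⟨0, h⟩ ⟨0, h⟩ ⟨0, h⟩ 0)
      exact mul_nonneg (by positivity) hM0
  have hΨbd : ∀ i j w, ‖Ψ i j w‖ ≤ lM * ‖x' w‖ := by
    intro i j w
    calc ‖Ψ i j w‖ ≤ ∑ p, ‖x' w p • DDvf d l g p i j (y w)‖ := by
          rw [hΨdef]; exact norm_sum_le _ _
      _ ≤ ∑ _p : Fin l, ‖x' w‖ * M := by
          refine Finset.sum_le_sum fun p _ => ?_
          rw [norm_smul]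
          exact mul_le_mul (by simpa using habs p w) (hM p i j (y w))
            (norm_nonneg _) (norm_nonneg _)
      _ = lM * ‖x' w‖ := by
          rw [Finset.sum_const, Finset.card_univ, Fintype.card_fin, nsmul_eq_mul, hlMdef]
          ring
  have hJbd : ∀ i j, ∀ r ∈ Icc s t, ‖J i j r‖ ≤ lM * A := by
    intro i j r hr
    have h1 : ‖∫ w in s..r, Ψ i j w‖ ≤ |∫ w in s..r, lM * ‖x' w‖| :=
      intervalIntegral.norm_integral_le_abs_of_norm_le
        (Filter.Eventually.of_forall fun w => hΨbd i j w)
        ((hnis s r hleft hr).const_mul lM)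
    rw [intervalIntegral.integral_const_mul, abs_of_nonneg
      (mul_nonneg hlM0 (intervalIntegral.integral_nonneg hr.1 fun u _ => norm_nonneg _))] at h1
    exact h1.trans (mul_le_mul_of_nonneg_left (hApart r hr) hlM0)
  have hI2bd : ∀ i j, ∀ v ∈ Icc s t,
      ‖∫ r in s..v, x' r i • J i j r‖ ≤ A * (lM * A) := by
    intro i j v hv
    have hbd : ∀ᵐ r ∂(MeasureTheory.volume.restrict (Set.uIoc s v)),
        ‖x' r i • J i j r‖ ≤ ‖x' r‖ * (lM * A) := by
      rw [uIoc_of_le hv.1]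
      refine (MeasureTheory.ae_restrict_iff' measurableSet_Ioc).2
        (Filter.Eventually.of_forall fun r hr => ?_)
      rw [norm_smul]
      exact mul_le_mul (by simpa using habs i r)
        (hJbd i j r ⟨hr.1.le, hr.2.trans hv.2⟩) (norm_nonneg _) (norm_nonneg _)
    have h1 := intervalIntegral.norm_integral_le_abs_of_norm_le hbd
      ((hnis s v hleft hv).mul_const (lM * A))
    rw [intervalIntegral.integral_mul_const, abs_of_nonneg (mul_nonneg
      (intervalIntegral.integral_nonneg hv.1 fun u _ => norm_nonneg _)
      (mul_nonneg hlM0 hA0))] at h1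
    exact h1.trans (mul_le_mul_of_nonneg_right (hApart v hv) (mul_nonneg hlM0 hA0))
  have hRbd : ∀ i j, ‖∫ v in s..t, x' v j • (∫ r in s..v, x' r i • J i j r)‖
      ≤ A * (A * (lM * A)) := by
    intro i j
    have hbd : ∀ᵐ v ∂(MeasureTheory.volume.restrict (Set.uIoc s t)),
        ‖x' v j • (∫ r in s..v, x' r i • J i j r)‖ ≤ ‖x' v‖ * (A * (lM * A)) := by
      rw [uIoc_of_le hst]
      refine (MeasureTheory.ae_restrict_iff' measurableSet_Ioc).2
        (Filter.Eventually.of_forall fun v hv => ?_)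
      rw [norm_smul]
      exact mul_le_mul (by simpa using habs j v) (hI2bd i j v ⟨hv.1.le, hv.2⟩)
        (norm_nonneg _) (norm_nonneg _)
    have h1 := intervalIntegral.norm_integral_le_abs_of_norm_le hbd
      (hni.mul_const (A * (lM * A)))
    rw [intervalIntegral.integral_mul_const, ← hA, abs_of_nonneg (mul_nonneg hA0
      (mul_nonneg hA0 (mul_nonneg hlM0 hA0)))] at h1
    exact h1
  rw [hmain]
  have hsum1 : ‖∑ j : Fin l, ∑ i : Fin l,
        ∫ v in s..t, x' v j • (∫ r in s..v, x' r i • J i j r)‖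
      ≤ ∑ _j : Fin l, ∑ _i : Fin l, (A * (A * (lM * A))) := by
    refine (norm_sum_le _ _).trans (Finset.sum_le_sum fun j _ => ?_)
    exact (norm_sum_le _ _).trans (Finset.sum_le_sum fun i _ => hRbd i j)
  refine hsum1.trans ?_
  simp only [Finset.sum_const, Finset.card_univ, Fintype.card_fin, nsmul_eq_mul]
  rcases Nat.eq_zero_or_pos l with hl | hl
  · subst hl
    have hx0 : ∀ u, ‖x' u‖ = 0 := by
      intro u
      rw [EuclideanSpace.norm_eq]
      simp
    have hA00 : A = 0 := by
      rw [hA, intervalIntegral.integral_congr (g := fun _ => (0:ℝ)) (fun u _ => hx0 u)]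
      simp
    norm_num [hA00]
  · have hM0 : 0 ≤ M := le_trans (norm_nonneg _) (hM ⟨0, hl⟩ ⟨0, hl⟩ ⟨0, hl⟩ 0)
    have heq : (l:ℝ) * ((l:ℝ) * (A * (A * (lM * A)))) = (l:ℝ)^3 * M * A^3 := by
      rw [hlMdef]; ring
    rw [heq]
    exact mul_le_mul_of_nonneg_right
      (mul_le_mul_of_nonneg_right (by linarith : (l:ℝ)^3 ≤ (l:ℝ)^3 + 1) hM0)
      (pow_nonneg hA0 3)


end
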